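/- Let F have characteristic 0, α ∈ F nonzero. Then the h(1)-module F[X] with action z ↦ α·I, x ↦ α·d/dX, y ↦ multiplication by X, is irreducible: its only h(1)-invariant subspaces are 0 and F[X]. -/

import Mathlib

/-- `X`, `Y`, `z` form a symplectic basis of a Heisenberg Lie algebra `L` of
dimension `2n+1` over `F`: they are a basis of `L`, with brackets
`⁅X i, Y i⁆ = z` and all other brackets of basis vectors zero. -/
structure IsHeisenbergBasis (F : Type*) [Field F] {n : ℕ} {L : Type*}
    [LieRing L] [LieAlgebra F L] (X Y : Fin n → L) (z : L) : Prop where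
  indep : LinearIndependent F (Sum.elim X (Sum.elim Y fun _ : Unit => z))
  span : Submodule.span F (Set.range (Sum.elim X (Sum.elim Y fun _ : Unit => z))) = ⊤
  lie_xy : ∀ i j, ⁅X i, Y j⁆ = if i = j then z else 0
  lie_xx : ∀ i j, ⁅X i, X j⁆ = 0
  lie_yy : ∀ i j, ⁅Y i, Y j⁆ = 0
  lie_xz : ∀ i, ⁅X i, z⁆ = 0
  lie_yz : ∀ i, ⁅Y i, z⁆ = 0

attribute [local instance 100] LieRing.ofAssociativeRing

theorem heisenberg_polynomial_module_irreducible_char_zero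
    (F : Type*) [Field F] [CharZero F] {L : Type*} [LieRing L] [LieAlgebra F L]
    (X Y : Fin 1 → L) (z : L) (hH : IsHeisenbergBasis F X Y z)
    (α : F) (hα : α ≠ 0)
    (R : L →ₗ⁅F⁆ Module.End F (Polynomial F))
    (hz : R z = α • 1)
    (hx : R (X 0) = α • (Polynomial.derivative : Polynomial F →ₗ[F] Polynomial F))
    (hy : R (Y 0) = LinearMap.mulLeft F Polynomial.X)
    (U : Submodule F (Polynomial F))
    (hU : ∀ a : L, ∀ v ∈ U, R a v ∈ U) :
    U = ⊥ ∨ U = ⊤ := by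

  by_cases hbot : U = ⊥
  · exact Or.inl hbot
  right
  -- U is closed under derivative and multiplication by X
  have hder : ∀ p ∈ U, Polynomial.derivative p ∈ U := by
    intro p hp
    have := hU (X 0) p hp
    rw [hx] at this
    have h2 : α • Polynomial.derivative p ∈ U := this
    have := U.smul_mem α⁻¹ h2
    rwa [smul_smul, inv_mul_cancel₀ hα, one_smul] at this
  have hmul : ∀ p ∈ U, Polynomial.X * p ∈ U := by
    intro p hp
    have := hU (Y 0) p hp
    rwa [hy] at this
  -- 1 ∈ U
  obtain ⟨p, hpU, hp0⟩ : ∃ p ∈ U, p ≠ 0 := by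
    by_contra h
    push_neg at h
    exact hbot (le_antisymm (fun q hq => by simpa using h q hq) bot_le)
  have key : ∀ n : ℕ, ∀ p ∈ U, p ≠ 0 → p.natDegree = n → (1 : Polynomial F) ∈ U := by
    intro n
    induction n using Nat.strong_induction_on with
    | _ n ih =>
      intro p hpU hp0 hn
      by_cases h0 : p.natDegree = 0
      · obtain ⟨c, rfl⟩ := Polynomial.natDegree_eq_zero.mp h0
        have hc : c ≠ 0 := fun hc => hp0 (by simp [hc])
        have := U.smul_mem c⁻¹ hpU
        simpa [Polynomial.smul_C, smul_eq_mul, inv_mul_cancel₀ hc] using this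
      · have hd0 : Polynomial.derivative p ≠ 0 := fun h =>
          h0 (Polynomial.natDegree_eq_zero_of_derivative_eq_zero h)
        exact ih (Polynomial.derivative p).natDegree
          (hn ▸ Polynomial.natDegree_derivative_lt h0)
          (Polynomial.derivative p) (hder p hpU) hd0 rfl
  have hone : (1 : Polynomial F) ∈ U := key p.natDegree p hpU hp0 rfl
  -- now all monomials are in U
  have hXn : ∀ n : ℕ, (Polynomial.X : Polynomial F) ^ n ∈ U := by
    intro n
    induction n with
    | zero => simpa using hone
    | succ n ih => simpa [pow_succ, mul_comm] using hmul _ ih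
  ext q
  simp only [Submodule.mem_top, iff_true]
  induction q using Polynomial.induction_on' with
  | add p q hp hq => exact U.add_mem hp hq
  | monomial n a =>
    have := U.smul_mem a (hXn n)
    rwa [Polynomial.smul_X_eq_monomial] at this
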